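/- Let k be a positive integer, λ = (λ_1,…,λ_n) a k-bounded partition, and D = D(λ) = λ_1 ×^{(k)} ⋯ ×^{(k)} λ_n. If D̄ is a skew diagram obtained from D by shifting one of its rows to the left (keeping the row's length), and the number of columns of D̄ is not more than the number of columns of D, then D̄ contains a cell of hook-length strictly greater than k (i.e. the hook-lengths of D̄ are not bounded by k). -/

import Mathlib

/-- A partition: a weakly decreasing list of positive integers
(parts listed from largest to smallest). -/
def IsPartitionList (l : List ℕ) : Prop :=
  l.Pairwise (· ≥ ·) ∧ ∀ x ∈ l, 0 < x

/-- A `k`-bounded partition: a partition all of whose parts are at most `k`. -/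
def IsKBoundedPartition (k : ℕ) (l : List ℕ) : Prop :=
  IsPartitionList l ∧ ∀ x ∈ l, x ≤ k

/-- Row `i` of a diagram whose rows (listed bottom-to-top) are encoded as
(start column, length) pairs. -/
def rowOf (D : List (ℕ × ℕ)) (i : ℕ) : ℕ × ℕ := D.getD i (0, 0)

/-- `D` encodes a skew diagram (a difference of Young diagrams, rows listed from
bottom to top): all rows are nonempty and, going up, both the left ends and the
right ends of the rows move weakly to the left. -/
def IsSkewRows (D : List (ℕ × ℕ)) : Prop :=
  (∀ r ∈ D, 0 < r.2) ∧
  D.Chain' fun r r' => r'.1 ≤ r.1 ∧ r'.1 + r'.2 ≤ r.1 + r.2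

/-- Cell in row `i` (from the bottom), column `j`, belongs to the diagram `D`. -/
def InDiag (D : List (ℕ × ℕ)) (i j : ℕ) : Prop :=
  i < D.length ∧ (rowOf D i).1 ≤ j ∧ j < (rowOf D i).1 + (rowOf D i).2

/-- The arm of a cell: the number of cells of `D` strictly to its east. -/
def armLen (D : List (ℕ × ℕ)) (i j : ℕ) : ℕ :=
  (rowOf D i).1 + (rowOf D i).2 - 1 - j

/-- The leg of a cell: the number of cells of `D` strictly to its north. -/
def legLen (D : List (ℕ × ℕ)) (i j : ℕ) : ℕ :=
  ((Finset.range D.length).filter fun i' =>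
    i < i' ∧ (rowOf D i').1 ≤ j ∧ j < (rowOf D i').1 + (rowOf D i').2).card

/-- The hook-length of a cell of `D`. -/
def hookLen (D : List (ℕ × ℕ)) (i j : ℕ) : ℕ := armLen D i j + legLen D i j + 1

/-- All hook-lengths of `D` are at most `k`. -/
def HookBounded (k : ℕ) (D : List (ℕ × ℕ)) : Prop :=
  ∀ i j, InDiag D i j → hookLen D i j ≤ k

/-- Shift `D` one column to the right and adjoin a new column of `m` cells in
column `0`, occupying the `m` consecutive rows `h, …, h + m - 1`. -/
def addCol (m h : ℕ) (D : List (ℕ × ℕ)) : List (ℕ × ℕ) :=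
  (List.range (max D.length (h + m))).map fun i =>
    if h ≤ i ∧ i < h + m then
      if i < D.length then (0, (rowOf D i).1 + (rowOf D i).2 + 1) else (0, 1)
    else ((rowOf D i).1 + 1, (rowOf D i).2)

/-- The placement of the new column at height `h` yields a genuine skew diagram
(rows stay contiguous) whose hook-lengths are bounded by `k`. -/
def ColValid (k m h : ℕ) (D : List (ℕ × ℕ)) : Prop :=
  (∀ i, h ≤ i → i < h + m → i < D.length → (rowOf D i).1 = 0) ∧
  IsSkewRows (addCol m h D) ∧ HookBounded k (addCol m h D)

/-- `k`-multiplication `m ×^{(k)} D`: adjoin a first column of length `m` to `D`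
so that the result is a skew diagram with hook-lengths bounded by `k`, having as
few rows as possible (the valid placement heights `h` all satisfy
`h + m ≥ number of rows`, so the lowest valid placement has fewest rows). -/
noncomputable def kMul (k m : ℕ) (D : List (ℕ × ℕ)) : List (ℕ × ℕ) :=
  addCol m (sInf {h | ColValid k m h D}) D

/-- `D(λ)`: the skew diagram obtained by `k`-multiplying the parts of `λ` from
right to left, the innermost part giving a single column. -/
noncomputable def kSkewDiagram (k : ℕ) : List ℕ → List (ℕ × ℕ)
  | [] => []
  | m :: rest => kMul k m (kSkewDiagram k rest)

/-- The `k`-conjugate `λ^{ω_k}`: the row lengths of `D(λ)`, read from the bottom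
row to the top row. -/
noncomputable def kConjugate (k : ℕ) (l : List ℕ) : List ℕ :=
  (kSkewDiagram k l).map Prod.snd

/-- The set of columns occupied by at least one cell of `D`. -/
def colsOf (D : List (ℕ × ℕ)) : Finset ℕ :=
  D.foldr (fun r s => Finset.Ico r.1 (r.1 + r.2) ∪ s) ∅


/-! ### auxiliary lemmas -/


lemma rowOf_eq_get {D : List (ℕ × ℕ)} {i : ℕ} (h : i < D.length) :
    rowOf D i = D.get ⟨i, h⟩ := by
  simp [rowOf, List.getD_eq_getElem?_getD, List.getElem?_eq_getElem h]

lemma rowOf_set_self {D : List (ℕ × ℕ)} {r : ℕ} (h : r < D.length) (p : ℕ × ℕ) :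
    rowOf (D.set r p) r = p := by
  simp [rowOf, List.getD_eq_getElem?_getD, List.getElem?_set, h]

lemma rowOf_set_ne {D : List (ℕ × ℕ)} {r i : ℕ} (p : ℕ × ℕ) (h : i ≠ r) :
    rowOf (D.set r p) i = rowOf D i := by
  simp [rowOf, List.getD_eq_getElem?_getD, List.getElem?_set, (Ne.symm h)]

lemma isSkewRows_iff {D : List (ℕ × ℕ)} : IsSkewRows D ↔
    (∀ i, i < D.length → 0 < (rowOf D i).2) ∧
    (∀ i, i + 1 < D.length →
      (rowOf D (i+1)).1 ≤ (rowOf D i).1 ∧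
      (rowOf D (i+1)).1 + (rowOf D (i+1)).2 ≤ (rowOf D i).1 + (rowOf D i).2) := by
  constructor
  · rintro ⟨h1, h2⟩
    constructor
    · intro i hi
      rw [rowOf_eq_get hi]
      exact h1 _ (List.get_mem D ⟨i, hi⟩)
    · intro i hi
      rw [rowOf_eq_get (show i < D.length by omega), rowOf_eq_get hi]
      exact List.isChain_iff_getElem.1 h2 i (by omega)
  · rintro ⟨h1, h2⟩
    constructor
    · intro r hr
      obtain ⟨i, hi, rfl⟩ := List.get_of_mem hr
      rw [← rowOf_eq_get]
      exact h1 _ i.isLt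
    · refine List.isChain_iff_getElem.2 ?_
      intro i hi
      have := h2 i (by omega)
      rwa [rowOf_eq_get (show i < D.length by omega), rowOf_eq_get hi] at this

lemma skew_mono {D : List (ℕ × ℕ)} (hD : IsSkewRows D) {i j : ℕ} (hij : i ≤ j)
    (hj : j < D.length) :
    (rowOf D j).1 ≤ (rowOf D i).1 ∧
    (rowOf D j).1 + (rowOf D j).2 ≤ (rowOf D i).1 + (rowOf D i).2 := by
  obtain ⟨-, h2⟩ := isSkewRows_iff.1 hD
  induction j, hij using Nat.le_induction with
  | base => exact ⟨le_rfl, le_rfl⟩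
  | succ n hn ih =>
    have h := h2 n (by omega)
    have := ih (by omega)
    omega

lemma skew_pos {D : List (ℕ × ℕ)} (hD : IsSkewRows D) {i : ℕ} (hi : i < D.length) :
    0 < (rowOf D i).2 := (isSkewRows_iff.1 hD).1 i hi

lemma length_addCol (m h : ℕ) (D : List (ℕ × ℕ)) :
    (addCol m h D).length = max D.length (h + m) := by
  simp [addCol]

lemma rowOf_addCol (m h : ℕ) (D : List (ℕ × ℕ)) {i : ℕ} (hi : i < max D.length (h + m)) :
    rowOf (addCol m h D) i =
      if h ≤ i ∧ i < h + m then
        if i < D.length then (0, (rowOf D i).1 + (rowOf D i).2 + 1) else (0, 1)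
      else ((rowOf D i).1 + 1, (rowOf D i).2) := by
  have h1 : i < (addCol m h D).length := by rw [length_addCol]; exact hi
  rw [rowOf_eq_get h1]
  simp only [addCol, List.get_eq_getElem, List.getElem_map, List.getElem_range]

lemma legLen_le_legLen {D₁ D₂ : List (ℕ × ℕ)} {i₁ i₂ j₁ j₂ : ℕ}
    (H : ∀ i', i₁ < i' → i' < D₁.length →
      (rowOf D₁ i').1 ≤ j₁ → j₁ < (rowOf D₁ i').1 + (rowOf D₁ i').2 →
      (i₂ < i' ∧ i' < D₂.length ∧ (rowOf D₂ i').1 ≤ j₂ ∧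
        j₂ < (rowOf D₂ i').1 + (rowOf D₂ i').2)) :
    legLen D₁ i₁ j₁ ≤ legLen D₂ i₂ j₂ := by
  apply Finset.card_le_card
  intro x hx
  simp only [Finset.mem_filter, Finset.mem_range] at hx ⊢
  obtain ⟨hx1, hx2, hx3, hx4⟩ := hx
  obtain ⟨a, b, c, d⟩ := H x hx2 hx1 hx3 hx4
  exact ⟨b, a, c, d⟩

lemma legLen_congr {D₁ D₂ : List (ℕ × ℕ)} {i₁ i₂ j₁ j₂ : ℕ}
    (H : ∀ i', (i₁ < i' ∧ i' < D₁.length ∧ (rowOf D₁ i').1 ≤ j₁ ∧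
        j₁ < (rowOf D₁ i').1 + (rowOf D₁ i').2) ↔
      (i₂ < i' ∧ i' < D₂.length ∧ (rowOf D₂ i').1 ≤ j₂ ∧
        j₂ < (rowOf D₂ i').1 + (rowOf D₂ i').2)) :
    legLen D₁ i₁ j₁ = legLen D₂ i₂ j₂ := by
  refine le_antisymm (legLen_le_legLen ?_) (legLen_le_legLen ?_)
  · intro i' a b c d; exact (H i').1 ⟨a, b, c, d⟩
  · intro i' a b c d; exact (H i').2 ⟨a, b, c, d⟩

lemma legLen_eq_count {D : List (ℕ × ℕ)} {i j a b : ℕ}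
    (H : ∀ i', (i < i' ∧ i' < D.length ∧ (rowOf D i').1 ≤ j ∧
        j < (rowOf D i').1 + (rowOf D i').2) ↔ (a ≤ i' ∧ i' < b)) :
    legLen D i j = b - a := by
  have : ((Finset.range D.length).filter fun i' =>
      i < i' ∧ (rowOf D i').1 ≤ j ∧ j < (rowOf D i').1 + (rowOf D i').2) =
      Finset.Ico a b := by
    ext x
    simp only [Finset.mem_filter, Finset.mem_range, Finset.mem_Ico]
    constructor
    · rintro ⟨h1, h2, h3, h4⟩; exact (H x).1 ⟨h2, h1, h3, h4⟩
    · intro hx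
      obtain ⟨a1, a2, a3, a4⟩ := (H x).2 hx
      exact ⟨a2, a1, a3, a4⟩
  rw [legLen, this, Nat.card_Ico]

lemma colValid_top {k m : ℕ} {D : List (ℕ × ℕ)} (hD : IsSkewRows D)
    (hB : HookBounded k D) (hm : 0 < m) (hmk : m ≤ k) :
    ColValid k m D.length D := by
  set n := D.length with hn
  have hlen : (addCol m n D).length = n + m := by
    rw [length_addCol]; omega
  have hrow_lo : ∀ i, i < n → rowOf (addCol m n D) i =
      ((rowOf D i).1 + 1, (rowOf D i).2) := by
    intro i hi
    rw [rowOf_addCol m n D (by omega)]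
    have : ¬ (n ≤ i ∧ i < n + m) := by omega
    simp [this]
  have hrow_hi : ∀ i, n ≤ i → i < n + m → rowOf (addCol m n D) i = (0, 1) := by
    intro i h1 h2
    rw [rowOf_addCol m n D (by omega)]
    have h3 : n ≤ i ∧ i < n + m := ⟨h1, h2⟩
    have h4 : ¬ i < n := by omega
    simp [h3, h4, ← hn]
  refine ⟨fun i h1 h2 h3 => by omega, ?_, ?_⟩
  · rw [isSkewRows_iff]
    constructor
    · intro i hi
      rw [hlen] at hi
      rcases lt_or_ge i n with h | h
      · rw [hrow_lo i h]; exact skew_pos hD h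
      · rw [hrow_hi i h hi]; norm_num
    · intro i hi
      rw [hlen] at hi
      rcases lt_or_ge (i+1) n with h | h
      · rw [hrow_lo i (by omega), hrow_lo (i+1) h]
        have := (isSkewRows_iff.1 hD).2 i h
        omega
      · rw [hrow_hi (i+1) h (by omega)]
        rcases lt_or_ge i n with h2 | h2
        · rw [hrow_lo i h2]
          have := skew_pos hD h2
          omega
        · rw [hrow_hi i h2 (by omega)]
          omega
  · intro i j hij
    obtain ⟨h1, h2, h3⟩ := hij
    rw [hlen] at h1
    rcases lt_or_ge i n with h | h
    · -- old cell, corresponds to (i, j-1) in D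
      rw [hrow_lo i h] at h2 h3
      simp only at h2 h3
      have hj1 : 1 ≤ j := by omega
      have harm : armLen (addCol m n D) i j = armLen D i (j-1) := by
        rw [armLen, armLen, hrow_lo i h]
        simp only
        omega
      have hleg : legLen (addCol m n D) i j = legLen D i (j-1) := by
        apply legLen_congr
        intro i'
        constructor
        · rintro ⟨a1, a2, a3, a4⟩
          rw [hlen] at a2
          rcases lt_or_ge i' n with hb | hb
          · rw [hrow_lo i' hb] at a3 a4
            simp only at a3 a4
            exact ⟨a1, hb, by omega, by omega⟩
          · rw [hrow_hi i' hb (by omega)] at a3 a4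
            simp only at a3 a4
            omega
        · rintro ⟨a1, a2, a3, a4⟩
          refine ⟨a1, by rw [hlen]; omega, ?_⟩
          rw [hrow_lo i' a2]
          simp only
          omega
      have hIn : InDiag D i (j-1) := ⟨h, by omega, by omega⟩
      have := hB i (j-1) hIn
      rw [hookLen] at this ⊢
      omega
    · -- new cell in column 0
      rw [hrow_hi i h h1] at h2 h3
      simp only at h2 h3
      have hj : j = 0 := by omega
      subst hj
      have harm : armLen (addCol m n D) i 0 = 0 := by
        rw [armLen, hrow_hi i h h1]
        simp
      have hleg : legLen (addCol m n D) i 0 = (n + m) - (i + 1) := by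
        apply legLen_eq_count
        intro i'
        constructor
        · rintro ⟨a1, a2, a3, a4⟩
          rw [hlen] at a2
          omega
        · rintro ⟨a1, a2⟩
          refine ⟨by omega, by rw [hlen]; omega, ?_⟩
          rw [hrow_hi i' (by omega) (by omega)]
          simp
      rw [hookLen, harm, hleg]
      omega

lemma colValid_bounds {k m h : ℕ} {D : List (ℕ × ℕ)} (hm : 0 < m)
    (hv : ColValid k m h D) : h ≤ D.length ∧ D.length ≤ h + m := by
  obtain ⟨-, hsk, -⟩ := hv
  set n := D.length with hn
  constructor
  · by_contra hc
    push_neg at hc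
    -- row n of addCol has length 0
    have h1 : n < (addCol m h D).length := by rw [length_addCol]; omega
    have := skew_pos hsk h1
    rw [rowOf_addCol m h D (by omega)] at this
    have h2 : ¬ (h ≤ n ∧ n < h + m) := by omega
    rw [if_neg h2] at this
    simp only at this
    have : (rowOf D n).2 > 0 := this
    have h3 : rowOf D n = (0, 0) := by
      rw [rowOf, List.getD_eq_getElem?_getD, List.getElem?_eq_none (by omega)]
      rfl
    rw [h3] at this
    exact absurd this (by norm_num)
  · by_contra hc
    push_neg at hc
    have h1 : h + m < (addCol m h D).length := by rw [length_addCol]; omega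
    have := (isSkewRows_iff.1 hsk).2 (h + m - 1) (by omega)
    rw [rowOf_addCol m h D (by omega), rowOf_addCol m h D (by omega)] at this
    have e1 : h + m - 1 + 1 = h + m := by omega
    rw [e1] at this
    have h2 : ¬ (h ≤ h + m ∧ h + m < h + m) := by omega
    have h3 : h ≤ h + m - 1 ∧ h + m - 1 < h + m := by omega
    rw [if_neg h2, if_pos h3, if_pos (by omega)] at this
    simp only at this
    omega

lemma kbdd_tail {k m : ℕ} {rest : List ℕ} (h : IsKBoundedPartition k (m :: rest)) :
    IsKBoundedPartition k rest := by
  obtain ⟨⟨hs, hp⟩, hb⟩ := h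
  exact ⟨⟨(List.pairwise_cons.1 hs).2, fun x hx => hp x (List.mem_cons_of_mem _ hx)⟩,
    fun x hx => hb x (List.mem_cons_of_mem _ hx)⟩

lemma kbdd_head {k m : ℕ} {rest : List ℕ} (h : IsKBoundedPartition k (m :: rest)) :
    0 < m ∧ m ≤ k ∧ ∀ x ∈ rest, x ≤ m := by
  obtain ⟨⟨hs, hp⟩, hb⟩ := h
  exact ⟨hp m (List.mem_cons_self), hb m (List.mem_cons_self),
    fun x hx => (List.pairwise_cons.1 hs).1 x hx⟩

lemma kSkew_spec (k : ℕ) : ∀ l : List ℕ, IsKBoundedPartition k l →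
    IsSkewRows (kSkewDiagram k l) ∧ HookBounded k (kSkewDiagram k l) := by
  intro l
  induction l with
  | nil =>
    intro _
    constructor
    · exact ⟨fun r hr => absurd hr List.not_mem_nil, List.isChain_nil⟩
    · intro i j hij
      obtain ⟨h1, -⟩ := hij
      simp [kSkewDiagram] at h1
  | cons m rest ih =>
    intro hl
    obtain ⟨hsk, hhb⟩ := ih (kbdd_tail hl)
    obtain ⟨hm, hmk, -⟩ := kbdd_head hl
    have hne : ColValid k m (kSkewDiagram k rest).length (kSkewDiagram k rest) :=
      colValid_top hsk hhb hm hmk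
    have hmem : ColValid k m (sInf {h | ColValid k m h (kSkewDiagram k rest)})
        (kSkewDiagram k rest) :=
      Nat.sInf_mem (s := {h | ColValid k m h (kSkewDiagram k rest)}) ⟨_, hne⟩
    exact ⟨hmem.2.1, hmem.2.2⟩

lemma kSkew_cons (k m : ℕ) (rest : List ℕ) (hl : IsKBoundedPartition k (m :: rest)) :
    ∃ h, ColValid k m h (kSkewDiagram k rest) ∧
      kSkewDiagram k (m :: rest) = addCol m h (kSkewDiagram k rest) ∧
      ∀ h', h' < h → ¬ ColValid k m h' (kSkewDiagram k rest) := by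
  obtain ⟨hsk, hhb⟩ := kSkew_spec k rest (kbdd_tail hl)
  obtain ⟨hm, hmk, -⟩ := kbdd_head hl
  have hne : ColValid k m (kSkewDiagram k rest).length (kSkewDiagram k rest) :=
    colValid_top hsk hhb hm hmk
  refine ⟨sInf {h | ColValid k m h (kSkewDiagram k rest)},
    Nat.sInf_mem (s := {h | ColValid k m h (kSkewDiagram k rest)}) ⟨_, hne⟩, rfl, ?_⟩
  intro h' hh' hc
  exact absurd (Nat.sInf_le (s := {h | ColValid k m h (kSkewDiagram k rest)}) hc)
    (by omega)

lemma addCol_rows {k m h : ℕ} {D : List (ℕ × ℕ)} (hm : 0 < m) (hv : ColValid k m h D) :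
    (addCol m h D).length = h + m ∧
    (∀ i, i < h → rowOf (addCol m h D) i = ((rowOf D i).1 + 1, (rowOf D i).2)) ∧
    (∀ i, h ≤ i → i < D.length →
      rowOf (addCol m h D) i = (0, (rowOf D i).2 + 1) ∧ (rowOf D i).1 = 0) ∧
    (∀ i, D.length ≤ i → i < h + m → rowOf (addCol m h D) i = (0, 1)) := by
  obtain ⟨hb1, hb2⟩ := colValid_bounds hm hv
  refine ⟨by rw [length_addCol]; omega, ?_, ?_, ?_⟩
  · intro i hi
    rw [rowOf_addCol m h D (by omega)]
    have : ¬ (h ≤ i ∧ i < h + m) := by omega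
    simp [this]
  · intro i h1 h2
    have hz : (rowOf D i).1 = 0 := hv.1 i h1 (by omega) h2
    constructor
    · rw [rowOf_addCol m h D (by omega)]
      have hc : h ≤ i ∧ i < h + m := by omega
      rw [if_pos hc, if_pos h2, hz]
      norm_num
    · exact hz
  · intro i h1 h2
    rw [rowOf_addCol m h D (by omega)]
    have hc : h ≤ i ∧ i < h + m := by omega
    have : ¬ i < D.length := by omega
    rw [if_pos hc, if_neg this]

section shifted

variable {F D₂ : List (ℕ × ℕ)} {t N : ℕ}
variable (hF : F.length = N) (hND : D₂.length ≤ N)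
variable (hlo : ∀ i, i < t → rowOf F i = ((rowOf D₂ i).1 + 1, (rowOf D₂ i).2))
variable (hmid : ∀ i, t ≤ i → i < D₂.length →
    rowOf F i = (0, (rowOf D₂ i).2 + 1) ∧ (rowOf D₂ i).1 = 0)
variable (hhi : ∀ i, D₂.length ≤ i → i < N → rowOf F i = (0, 1))

include hF hND hlo hmid hhi

lemma cover_shift {j : ℕ} (hj : 1 ≤ j) (i' : ℕ) :
    (i' < F.length ∧ (rowOf F i').1 ≤ j ∧ j < (rowOf F i').1 + (rowOf F i').2) ↔
    (i' < D₂.length ∧ (rowOf D₂ i').1 ≤ j - 1 ∧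
      j - 1 < (rowOf D₂ i').1 + (rowOf D₂ i').2) := by
  constructor
  · rintro ⟨a1, a2, a3⟩
    rw [hF] at a1
    rcases lt_or_ge i' D₂.length with hb | hb
    · refine ⟨hb, ?_, ?_⟩ <;>
      · rcases lt_or_ge i' t with hb2 | hb2
        · rw [hlo i' hb2] at a2 a3; simp only at a2 a3; omega
        · obtain ⟨e1, e2⟩ := hmid i' hb2 hb
          rw [e1] at a2 a3; simp only at a2 a3; rw [e2]; omega
    · rw [hhi i' hb a1] at a2 a3
      simp only at a2 a3
      omega
  · rintro ⟨a1, a2, a3⟩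
    refine ⟨by omega, ?_, ?_⟩ <;>
    · rcases lt_or_ge i' t with hb2 | hb2
      · rw [hlo i' hb2]; simp only; omega
      · obtain ⟨e1, e2⟩ := hmid i' hb2 a1
        rw [e1]; rw [e2] at a2 a3; simp only; omega

lemma hook_shift {k : ℕ} (hB : HookBounded k D₂) {i j : ℕ}
    (hIn : InDiag F i j) (hj : 1 ≤ j) : hookLen F i j ≤ k := by
  obtain ⟨h1, h2, h3⟩ := hIn
  have hcov := (cover_shift hF hND hlo hmid hhi hj i).1 ⟨h1, h2, h3⟩
  obtain ⟨b1, b2, b3⟩ := hcov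
  have harm : armLen F i j = armLen D₂ i (j-1) := by
    rw [armLen, armLen]
    rcases lt_or_ge i t with hb2 | hb2
    · rw [hlo i hb2]; simp only; omega
    · obtain ⟨e1, e2⟩ := hmid i hb2 b1
      rw [e1, e2]; simp only; omega
  have hleg : legLen F i j = legLen D₂ i (j-1) := by
    apply legLen_congr
    intro i'
    constructor
    · rintro ⟨a1, a2, a3, a4⟩
      obtain ⟨c1, c2, c3⟩ := (cover_shift hF hND hlo hmid hhi hj i').1 ⟨a2, a3, a4⟩
      exact ⟨a1, c1, c2, c3⟩
    · rintro ⟨a1, a2, a3, a4⟩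
      obtain ⟨c1, c2, c3⟩ := (cover_shift hF hND hlo hmid hhi hj i').2 ⟨a2, a3, a4⟩
      exact ⟨a1, c1, c2, c3⟩
  have := hB i (j-1) ⟨b1, b2, b3⟩
  rw [hookLen] at this ⊢
  omega

lemma leg_col0 {i : ℕ} (hi : t ≤ i) (hiN : i < N) : legLen F i 0 = N - (i + 1) := by
  apply legLen_eq_count
  intro i'
  constructor
  · rintro ⟨a1, a2, -⟩
    rw [hF] at a2
    omega
  · rintro ⟨a1, a2⟩
    refine ⟨by omega, by rw [hF]; omega, ?_⟩
    rcases lt_or_ge i' D₂.length with hb | hb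
    · rw [(hmid i' (by omega) hb).1]; simp
    · rw [hhi i' hb a2]; simp

end shifted

set_option linter.unusedSectionVars false in
lemma kSkew_struct (k : ℕ) (l : List ℕ) (hl : IsKBoundedPartition k l)
    (hne : kSkewDiagram k l ≠ []) :
    ∃ h₂ m₂, (kSkewDiagram k l).length = h₂ + m₂ ∧ 0 < m₂ ∧ m₂ ∈ l ∧
      (∀ i, i < h₂ → 1 ≤ (rowOf (kSkewDiagram k l) i).1) ∧
      (∀ i, h₂ ≤ i → i < (kSkewDiagram k l).length →
        (rowOf (kSkewDiagram k l) i).1 = 0) := by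
  cases l with
  | nil => simp [kSkewDiagram] at hne
  | cons m₂ rest₂ =>
    obtain ⟨h₂, hv₂, hEq₂, -⟩ := kSkew_cons k m₂ rest₂ hl
    have hm₂ : 0 < m₂ := (kbdd_head hl).1
    obtain ⟨hlen₂, rlo₂, rmid₂, rhi₂⟩ := addCol_rows hm₂ hv₂
    obtain ⟨hc1, hc2⟩ := colValid_bounds hm₂ hv₂
    rw [hEq₂]
    refine ⟨h₂, m₂, hlen₂, hm₂, List.mem_cons_self, ?_, ?_⟩
    · intro i hi
      rw [rlo₂ i hi]
      simp
    · intro i h1 h2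
      rw [hlen₂] at h2
      rcases lt_or_ge i (kSkewDiagram k rest₂).length with hb | hb
      · rw [(rmid₂ i h1 hb).1]
      · rw [rhi₂ i hb h2]

lemma main_no_shift (k : ℕ) : ∀ (l : List ℕ), IsKBoundedPartition k l →
    ∀ r s', r < (kSkewDiagram k l).length → s' < (rowOf (kSkewDiagram k l) r).1 →
    IsSkewRows ((kSkewDiagram k l).set r (s', (rowOf (kSkewDiagram k l) r).2)) →
    HookBounded k ((kSkewDiagram k l).set r (s', (rowOf (kSkewDiagram k l) r).2)) →
    False := by
  intro l
  induction l with
  | nil =>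
    intro _ r s' hr _ _ _
    simp [kSkewDiagram] at hr
  | cons m rest ih =>
    intro hl r s' hr hs hsk' hhb'
    obtain ⟨h, hv, hEq, hmin⟩ := kSkew_cons k m rest hl
    obtain ⟨hm, hmk, hmge⟩ := kbdd_head hl
    obtain ⟨hsk₂, hhb₂⟩ := kSkew_spec k rest (kbdd_tail hl)
    obtain ⟨hlenD, rlo, rmid, rhi⟩ := addCol_rows hm hv
    obtain ⟨hb1, hb2⟩ := colValid_bounds hm hv
    rw [hEq] at hr hs hsk' hhb'
    set D₂ := kSkewDiagram k rest with hD₂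
    set n₂ := D₂.length with hn₂
    set D := addCol m h D₂ with hD
    rw [hlenD] at hr
    -- r is below the new column
    have hrh : r < h := by
      by_contra hc
      push_neg at hc
      rcases lt_or_ge r n₂ with h1 | h1
      · have := (rmid r hc h1).1
        rw [this] at hs
        simp at hs
      · have := rhi r h1 hr
        rw [this] at hs
        simp at hs
    have hrn : r < n₂ := by omega
    set c := (rowOf D₂ r).1 with hc
    set L := (rowOf D₂ r).2 with hL
    have hLpos : 0 < L := skew_pos hsk₂ hrn
    have rowDr : rowOf D r = (c + 1, L) := rlo r hrh
    rw [rowDr] at hs hsk' hhb'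
    simp only at hs hsk' hhb'
    -- facts about D'
    set D' := D.set r (s', L) with hD'
    have lenD' : D'.length = h + m := by rw [hD', List.length_set, hlenD]
    have rowD'r : rowOf D' r = (s', L) := rowOf_set_self (by omega) _
    have rowD'ne : ∀ i, i ≠ r → rowOf D' i = rowOf D i := fun i hi => rowOf_set_ne _ hi
    have hskD : IsSkewRows D := hv.2.1
    have hhbD : HookBounded k D := hv.2.2
    rcases Nat.eq_zero_or_pos s' with hs0 | hs1
    · -- CASE B : s' = 0
      subst hs0
      -- the shifted row sits immediately below the new column
      have hh : h = r + 1 := by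
        rcases eq_or_ne h (r+1) with he | hne2
        · exact he
        · exfalso
          have hlt : r + 1 < h := by omega
          have hch := (isSkewRows_iff.1 hsk').2 r (by rw [lenD']; omega)
          rw [rowD'ne (r+1) (by omega), rlo (r+1) hlt, rowD'r] at hch
          simp only at hch
          omega
      -- hook length of cell (r,0) of D' is L + m
      have hcov0 : ∀ i', (r < i' ∧ i' < D'.length ∧ (rowOf D' i').1 ≤ 0 ∧
          0 < (rowOf D' i').1 + (rowOf D' i').2) ↔ (r + 1 ≤ i' ∧ i' < h + m) := by
        intro i'
        constructor
        · rintro ⟨a1, a2, -, -⟩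
          rw [lenD'] at a2
          omega
        · rintro ⟨a1, a2⟩
          have hrow : (rowOf D' i').1 = 0 ∧ 0 < (rowOf D' i').2 := by
            rw [rowD'ne i' (by omega)]
            rcases lt_or_ge i' n₂ with hb | hb
            · rw [(rmid i' (by omega) hb).1]; simp
            · rw [rhi i' hb a2]; simp
          exact ⟨by omega, by rw [lenD']; omega, by omega, by omega⟩
      have hLm : L + m ≤ k := by
        have hIn : InDiag D' r 0 := by
          refine ⟨by rw [lenD']; omega, ?_, ?_⟩ <;> rw [rowD'r] <;> simp only <;> omega
        have hhk := hhb' r 0 hIn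
        rw [hookLen, armLen, rowD'r, legLen_eq_count hcov0] at hhk
        simp only at hhk
        omega
      -- structure of the previous step of the construction
      have hneD₂ : kSkewDiagram k rest ≠ [] := by
        intro h0
        have hx : n₂ = (kSkewDiagram k rest).length := by rw [hn₂, hD₂]
        rw [h0] at hx
        simp at hx
        omega
      obtain ⟨h₂, m₂, hsum, hm₂, hm₂mem, hlow₂, hzero₂⟩ :=
        kSkew_struct k rest (kbdd_tail hl) hneD₂
      rw [← hD₂] at hsum hlow₂ hzero₂
      have hm₂le : m₂ ≤ m := hmge m₂ hm₂mem
      rcases Nat.eq_zero_or_pos c with hc0 | hc1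
      · -- the shifted row started in column 1
        rcases lt_or_ge n₂ (h + m) with hlt | hge
        · -- placing the column at height r would have been valid : contradiction
          have hzero : ∀ i, r ≤ i → i < n₂ → (rowOf D₂ i).1 = 0 := by
            intro i h1 h2
            rcases eq_or_ne i r with rfl | hne2
            · rw [← hc]; exact hc0
            · exact hv.1 i (by omega) (by omega) (by omega)
          have hlenF : (addCol m r D₂).length = r + m := by
            rw [length_addCol]; omega
          have rFlo : ∀ i, i < r → rowOf (addCol m r D₂) i =
              ((rowOf D₂ i).1 + 1, (rowOf D₂ i).2) := by
            intro i hi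
            rw [rowOf_addCol m r D₂ (by omega)]
            have hx : ¬ (r ≤ i ∧ i < r + m) := by omega
            simp [hx]
          have rFmid : ∀ i, r ≤ i → i < D₂.length →
              rowOf (addCol m r D₂) i = (0, (rowOf D₂ i).2 + 1) ∧
                (rowOf D₂ i).1 = 0 := by
            intro i h1 h2
            have hz : (rowOf D₂ i).1 = 0 := hzero i h1 (by omega)
            refine ⟨?_, hz⟩
            rw [rowOf_addCol m r D₂ (by omega),
              if_pos (show r ≤ i ∧ i < r + m from ⟨h1, by omega⟩), if_pos h2, hz]
            norm_num
          have rFhi : ∀ i, D₂.length ≤ i → i < r + m →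
              rowOf (addCol m r D₂) i = (0, 1) := by
            intro i h1 h2
            rw [rowOf_addCol m r D₂ (by omega),
              if_pos (show r ≤ i ∧ i < r + m from ⟨by omega, h2⟩),
              if_neg (show ¬ i < D₂.length by omega)]
          refine hmin r (by omega) ⟨fun i h1 h2 h3 => hzero i h1 (by omega), ?_, ?_⟩
          · -- skewness of the lower placement
            rw [isSkewRows_iff]
            constructor
            · intro i hi
              rw [hlenF] at hi
              rcases lt_or_ge i r with h1 | h1
              · rw [rFlo i h1]; exact skew_pos hsk₂ (by omega)
              · rcases lt_or_ge i D₂.length with h2 | h2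
                · rw [(rFmid i h1 h2).1]; simp
                · rw [rFhi i h2 hi]; norm_num
            · intro i hi
              rw [hlenF] at hi
              rcases lt_or_ge (i+1) r with h1 | h1
              · rw [rFlo i (by omega), rFlo (i+1) h1]
                have hch := (isSkewRows_iff.1 hsk₂).2 i (by omega)
                simp only
                omega
              · rcases lt_or_ge (i+1) D₂.length with h2 | h2
                · have hch := (isSkewRows_iff.1 hsk₂).2 i (by omega)
                  have hz1 := (rFmid (i+1) (by omega) h2).2
                  rw [(rFmid (i+1) (by omega) h2).1]
                  rcases lt_or_ge i r with h3 | h3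
                  · rw [rFlo i h3]
                    simp only
                    omega
                  · have hz0 := (rFmid i h3 (by omega)).2
                    rw [(rFmid i h3 (by omega)).1]
                    simp only
                    omega
                · rw [rFhi (i+1) h2 (by omega)]
                  rcases lt_or_ge i D₂.length with h3 | h3
                  · rw [(rFmid i (by omega) h3).1]
                    simp only
                    omega
                  · rw [rFhi i h3 (by omega)]
                    simp only
                    omega
          · -- hook lengths of the lower placement
            intro i j hIn
            rcases Nat.eq_zero_or_pos j with rfl | hj1
            · -- column 0 cells
              obtain ⟨h1, h2, h3⟩ := hIn
              rw [hlenF] at h1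
              have hir : r ≤ i := by
                by_contra hcon
                push_neg at hcon
                rw [rFlo i hcon] at h2
                simp only at h2
                omega
              have hleg : legLen (addCol m r D₂) i 0 = (r + m) - (i + 1) :=
                leg_col0 hlenF (by omega) rFlo rFmid rFhi hir h1
              rcases lt_or_ge i D₂.length with hin | hin
              · have harm : armLen (addCol m r D₂) i 0 = (rowOf D₂ i).2 := by
                  rw [armLen, (rFmid i hir hin).1]
                  simp only
                  omega
                rcases eq_or_ne i r with rfl | hir2
                · rw [hookLen, harm, hleg, ← hL]
                  omega
                · have hInD : InDiag D i 0 := by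
                    refine ⟨by omega, ?_, ?_⟩ <;>
                      rw [(rmid i (by omega) (by omega)).1] <;> simp
                  have harmD : armLen D i 0 = (rowOf D₂ i).2 := by
                    rw [armLen, (rmid i (by omega) (by omega)).1]
                    simp only
                    omega
                  have hlegD : legLen D i 0 = (h + m) - (i + 1) :=
                    leg_col0 hlenD (by omega) rlo rmid rhi (by omega) (by omega)
                  have hk := hhbD i 0 hInD
                  rw [hookLen, harmD, hlegD] at hk
                  rw [hookLen, harm, hleg]
                  omega
              · have harm : armLen (addCol m r D₂) i 0 = 0 := by
                  rw [armLen, rFhi i hin h1]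
                  simp
                rw [hookLen, harm, hleg]
                omega
            · exact hook_shift hlenF (by omega) rFlo rFmid rFhi hhb₂ hIn hj1
        · -- the column reaches exactly the top of D₂ : structurally impossible
          have hr2 : h₂ ≤ r := by
            by_contra hcon
            push_neg at hcon
            have hy := hlow₂ r hcon
            omega
          omega
      · -- c ≥ 1 : shift row r of D₂ to column 0 and apply the IH
        have hhn : h < n₂ := by
          rcases lt_or_ge h n₂ with hx | hx
          · exact hx
          · exfalso
            have hy := hzero₂ r (by omega) (by omega)
            omega
        set E := D₂.set r (0, L) with hE
        have lenE : E.length = n₂ := by rw [hE, List.length_set]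
        have rowEr : rowOf E r = (0, L) := rowOf_set_self (by omega) _
        have rowEne : ∀ i, i ≠ r → rowOf E i = rowOf D₂ i :=
          fun i hi => rowOf_set_ne _ hi
        have hskE : IsSkewRows E := by
          rw [isSkewRows_iff]
          constructor
          · intro i hi
            rw [lenE] at hi
            rcases eq_or_ne i r with rfl | hir
            · rw [rowEr]; exact hLpos
            · rw [rowEne i hir]; exact skew_pos hsk₂ hi
          · intro i hi
            rw [lenE] at hi
            rcases eq_or_ne (i+1) r with he | he
            · rw [rowEne i (by omega), he, rowEr]
              have hch := (isSkewRows_iff.1 hsk₂).2 i (by omega)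
              rw [he] at hch
              simp only at hch ⊢
              omega
            · rcases eq_or_ne i r with rfl | hir
              · rw [rowEr, rowEne (i+1) he]
                have hz := (rmid (i+1) (by omega) (by omega)).2
                have hch' := (isSkewRows_iff.1 hsk').2 i (by rw [lenD']; omega)
                rw [rowD'r, rowD'ne (i+1) he,
                  (rmid (i+1) (by omega) (by omega)).1] at hch'
                simp only at hch' ⊢
                omega
              · rw [rowEne i hir, rowEne (i+1) he]
                exact (isSkewRows_iff.1 hsk₂).2 i (by omega)
        have hhbE : HookBounded k E := by
          intro i j hIn
          obtain ⟨h1, h2, h3⟩ := hIn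
          rw [lenE] at h1
          rcases lt_trichotomy i r with hlt2 | rfl | hgt2
          · -- rows below the shifted row
            have hrow : rowOf E i = rowOf D₂ i := rowEne i (by omega)
            rw [hrow] at h2 h3
            have harm : armLen E i j = armLen D₂ i j := by
              rw [armLen, armLen, hrow]
            have hjc : c ≤ j := by
              have hmo := (skew_mono hsk₂ (le_of_lt hlt2) hrn).1
              omega
            have hleg : legLen E i j ≤ legLen D₂ i j := by
              apply legLen_le_legLen
              intro i' a1 a2 a3 a4
              rw [lenE] at a2
              rcases eq_or_ne i' r with rfl | hir'
              · rw [rowEr] at a3 a4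
                simp only at a3 a4
                refine ⟨a1, by omega, ?_, ?_⟩
                · rw [← hc]; omega
                · rw [← hc, ← hL]; omega
              · rw [rowEne i' hir'] at a3 a4
                exact ⟨a1, by omega, a3, a4⟩
            have hk := hhb₂ i j ⟨by omega, h2, h3⟩
            rw [hookLen] at hk ⊢
            omega
          · -- the shifted row : compare with the same cell of D'
            rw [rowEr] at h2 h3
            have harm : armLen E i j = armLen D' i j := by
              rw [armLen, armLen, rowEr, rowD'r]
            have hleg : legLen E i j ≤ legLen D' i j := by
              apply legLen_le_legLen
              intro i' a1 a2 a3 a4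
              rw [lenE] at a2
              have hir' : i' ≠ i := by omega
              rw [rowEne i' hir'] at a3 a4
              have hz := (rmid i' (by omega) a2).2
              refine ⟨a1, by rw [lenD']; omega, ?_, ?_⟩
              · rw [rowD'ne i' hir', (rmid i' (by omega) a2).1]
                simp
              · rw [rowD'ne i' hir', (rmid i' (by omega) a2).1]
                simp only
                omega
            have hInD' : InDiag D' i j :=
              ⟨by rw [lenD']; omega, by rw [rowD'r]; exact h2,
                by rw [rowD'r]; exact h3⟩
            have hk := hhb' i j hInD'
            rw [hookLen] at hk ⊢
            omega
          · -- rows above the shifted row : unchanged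
            have hrow : rowOf E i = rowOf D₂ i := rowEne i (by omega)
            rw [hrow] at h2 h3
            have harm : armLen E i j = armLen D₂ i j := by
              rw [armLen, armLen, hrow]
            have hleg : legLen E i j = legLen D₂ i j := by
              apply legLen_congr
              intro i'
              constructor
              · rintro ⟨a1, a2, a3, a4⟩
                rw [lenE] at a2
                rw [rowEne i' (by omega)] at a3 a4
                exact ⟨a1, by omega, a3, a4⟩
              · rintro ⟨a1, a2, a3, a4⟩
                rw [← rowEne i' (by omega)] at a3 a4
                exact ⟨a1, by rw [lenE]; omega, a3, a4⟩
            have hk := hhb₂ i j ⟨by omega, h2, h3⟩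
            rw [hookLen] at hk ⊢
            omega
        have hrE : r < (kSkewDiagram k rest).length := by rw [← hD₂]; omega
        have hsE : 0 < (rowOf (kSkewDiagram k rest) r).1 := by
          rw [← hD₂, ← hc]; omega
        have hEeq : E = (kSkewDiagram k rest).set r
            (0, (rowOf (kSkewDiagram k rest) r).2) := by
          rw [hE, ← hD₂, ← hL]
        exact ih (kbdd_tail hl) r 0 hrE hsE (hEeq ▸ hskE) (hEeq ▸ hhbE)
    · -- CASE A : s' ≥ 1
      set E := D₂.set r (s' - 1, L) with hE
      have lenE : E.length = n₂ := by rw [hE, List.length_set]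
      have rowEr : rowOf E r = (s' - 1, L) := rowOf_set_self (by omega) _
      have rowEne : ∀ i, i ≠ r → rowOf E i = rowOf D₂ i := fun i hi => rowOf_set_ne _ hi
      -- coverage translation : cell (i', j) of E ↔ cell (i', j+1) of D'
      have cov : ∀ i' j, (i' < E.length ∧ (rowOf E i').1 ≤ j ∧
          j < (rowOf E i').1 + (rowOf E i').2) ↔
          (i' < D'.length ∧ (rowOf D' i').1 ≤ j + 1 ∧
          j + 1 < (rowOf D' i').1 + (rowOf D' i').2) := by
        intro i' j
        rw [lenE, lenD']
        rcases eq_or_ne i' r with rfl | hir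
        · rw [rowEr, rowD'r]
          simp only
          omega
        · rw [rowEne i' hir, rowD'ne i' hir]
          rcases lt_or_ge i' h with h1 | h1
          · rw [rlo i' h1]
            simp only
            omega
          · rcases lt_or_ge i' n₂ with h2 | h2
            · obtain ⟨e1, e2⟩ := rmid i' h1 h2
              rw [e1, e2]
              simp only
              omega
            · constructor
              · intro ha; omega
              · intro ha
                rw [rhi i' h2 (by omega)] at ha
                simp only at ha
                omega
      -- E is a skew diagram
      have hskE : IsSkewRows E := by
        rw [isSkewRows_iff]
        constructor
        · intro i hi
          rw [lenE] at hi
          rcases eq_or_ne i r with rfl | hir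
          · rw [rowEr]; exact hLpos
          · rw [rowEne i hir]; exact skew_pos hsk₂ hi
        · intro i hi
          rw [lenE] at hi
          have hchain' := (isSkewRows_iff.1 hsk').2
          rcases eq_or_ne (i+1) r with he | he
          · -- row below the shifted row
            have hir : i ≠ r := by omega
            rw [rowEne i hir, he, rowEr]
            have := hchain' i (by rw [lenD']; omega)
            rw [rowD'ne i hir, he, rowD'r, rlo i (by omega)] at this
            simp only at this ⊢
            omega
          · rcases eq_or_ne i r with rfl | hir
            · -- row above the shifted row
              rw [rowEr, rowEne (i+1) he]
              have := hchain' i (by rw [lenD']; omega)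
              rw [rowD'r, rowD'ne (i+1) he] at this
              rcases lt_or_ge (i+1) h with h1 | h1
              · rw [rlo (i+1) h1] at this
                simp only at this ⊢
                omega
              · -- i + 1 = h ≤ i+1 < n₂
                obtain ⟨e1, e2⟩ := rmid (i+1) h1 hi
                rw [e1] at this
                rw [e2]
                simp only at this ⊢
                omega
            · rw [rowEne i hir, rowEne (i+1) he]
              exact (isSkewRows_iff.1 hsk₂).2 i hi
      -- E is hook bounded
      have hhbE : HookBounded k E := by
        intro i j hij
        obtain ⟨h1, h2, h3⟩ := hij
        have hcov := (cov i j).1 ⟨h1, h2, h3⟩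
        have harm : armLen E i j = armLen D' i (j+1) := by
          rw [armLen, armLen]
          rcases eq_or_ne i r with rfl | hir
          · rw [rowEr, rowD'r]; simp only; omega
          · rw [lenE] at h1
            rw [rowEne i hir, rowD'ne i hir]
            rcases lt_or_ge i h with hh | hh
            · rw [rlo i hh]; simp only; omega
            · obtain ⟨e1, e2⟩ := rmid i hh h1
              rw [e1, e2]; simp only; omega
        have hleg : legLen E i j = legLen D' i (j+1) := by
          apply legLen_congr
          intro i'
          constructor
          · rintro ⟨a1, a2, a3, a4⟩
            obtain ⟨b1, b2, b3⟩ := (cov i' j).1 ⟨a2, a3, a4⟩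
            exact ⟨a1, b1, b2, b3⟩
          · rintro ⟨a1, a2, a3, a4⟩
            obtain ⟨b1, b2, b3⟩ := (cov i' j).2 ⟨a2, a3, a4⟩
            exact ⟨a1, b1, b2, b3⟩
        have := hhb' i (j+1) hcov
        rw [hookLen] at this ⊢
        omega
      -- apply the induction hypothesis
      have hsE : s' - 1 < (rowOf (kSkewDiagram k rest) r).1 := by
        rw [← hD₂, ← hc]; omega
      have hrE : r < (kSkewDiagram k rest).length := by rw [← hD₂, ← hn₂]; omega
      have hEeq : E = (kSkewDiagram k rest).set r (s' - 1, (rowOf (kSkewDiagram k rest) r).2) := by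
        rw [hE, ← hD₂, ← hL]
      exact ih (kbdd_tail hl) r (s' - 1) hrE hsE (hEeq ▸ hskE) (hEeq ▸ hhbE)

/-- Let `λ` be a `k`-bounded partition and `D = D(λ)`.  If `D'` is a
skew diagram obtained from `D` by shifting one of its rows to the left (keeping
its length), and the number of columns of `D'` is not more than the number of
columns of `D`, then `D'` has a cell of hook-length strictly greater than `k`. -/
theorem shift_row_not_hookBounded (k : ℕ) (hk : 0 < k) (l : List ℕ)
    (hl : IsKBoundedPartition k l)
    (r : ℕ) (hr : r < (kSkewDiagram k l).length)
    (s' : ℕ) (hs : s' < (rowOf (kSkewDiagram k l) r).1)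
    (D' : List (ℕ × ℕ))
    (hD' : D' = (kSkewDiagram k l).set r (s', (rowOf (kSkewDiagram k l) r).2))
    (hskew : IsSkewRows D')
    (hcols : (colsOf D').card ≤ (colsOf (kSkewDiagram k l)).card) :
    ¬ HookBounded k D' := by
  intro hhb
  subst hD'
  exact main_no_shift k l hl r s' hr hs hskew hhb
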